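/- Let ν ≥ 1, let a ∈ ℂ \ {0}, let z₁,…,z_m ∈ ℂ be pairwise distinct with |z_k| < 1 whenever μ_k ≥ 2, let μ₁,…,μ_m ≥ 1 be integers with μ₁+⋯+μ_m = ν, and let ε > 0. Set P_k := a·(X−z_k)^{μ_k−1}·∏_{j≠k}(X−z_j)^{μ_j} and, for 1 ≤ j ≤ μ_k−1, Q_{k,j} := a·(X−z_k)^{j−1}·∏_{ℓ≠k}(X−z_ℓ)^{μ_ℓ}. Then the Hermitian form q_e on ℂ^ν defined by q_e(w⁰,…,w^{ν−1}) := Σ_{k=1}^m μ_k·|P_k(T)w⁰|² + Σ_{k=1}^m Σ_{j=1}^{μ_k−1} ε^{μ_k−j}·(1−|z_k|²)^{2(μ_k−j)}·|Q_{k,j}(T)w⁰|² is positive definite. -/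

import Mathlib

open Polynomial

/-- `P_k = a (X − z_k)^{μ_k−1} ∏_{j≠k} (X − z_j)^{μ_j}`. -/
noncomputable def Pkpoly (m : ℕ) (a : ℂ) (z : Fin m → ℂ) (μ : Fin m → ℕ) (k : Fin m) :
    Polynomial ℂ :=
  C a * (X - C (z k)) ^ (μ k - 1) * ∏ j ∈ Finset.univ.erase k, (X - C (z j)) ^ (μ j)

/-- `Q_{k,j} = a (X − z_k)^{j−1} ∏_{ℓ≠k} (X − z_ℓ)^{μ_ℓ}`. -/
noncomputable def Qkjpoly (m : ℕ) (a : ℂ) (z : Fin m → ℂ) (μ : Fin m → ℕ) (k : Fin m)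
    (j : ℕ) : Polynomial ℂ :=
  C a * (X - C (z k)) ^ (j - 1) * ∏ l ∈ Finset.univ.erase k, (X - C (z l)) ^ (μ l)

/-- The action `R(T)w⁰ = Σ_i r_i w^i` of a polynomial `R = Σ_i r_i X^i` of degree
`≤ ν−1` on a vector `(w⁰,…,w^{ν−1}) ∈ ℂ^ν`. -/
noncomputable def polyActV (ν : ℕ) (R : Polynomial ℂ) (w : Fin ν → ℂ) : ℂ :=
  ∑ i : Fin ν, R.coeff i * w i


noncomputable def Bfam (m : ℕ) (a : ℂ) (z : Fin m → ℂ) (μ : Fin m → ℕ)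
    (k : Fin m) (j : ℕ) : Polynomial ℂ :=
  C a * (X - C (z k)) ^ j * ∏ l ∈ Finset.univ.erase k, (X - C (z l)) ^ (μ l)

theorem Bfam_mem (m ν : ℕ) (a : ℂ) (z : Fin m → ℂ) (μ : Fin m → ℕ)
    (hμ : ∀ k, 1 ≤ μ k) (hsum : ∑ k : Fin m, μ k = ν)
    (k : Fin m) (j : ℕ) (hj : j ≤ μ k - 1) :
    Bfam m a z μ k j ∈ degreeLT ℂ ν := by
  rw [mem_degreeLT, Bfam]
  calc (C a * (X - C (z k)) ^ j * ∏ l ∈ Finset.univ.erase k, (X - C (z l)) ^ (μ l)).degree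
      ≤ (C a).degree + ((X - C (z k)) ^ j).degree
          + (∏ l ∈ Finset.univ.erase k, (X - C (z l)) ^ (μ l)).degree := by
        refine le_trans (degree_mul_le _ _) ?_
        exact add_le_add (degree_mul_le _ _) le_rfl
    _ ≤ 0 + (j : WithBot ℕ) + (∑ l ∈ Finset.univ.erase k, (μ l : WithBot ℕ)) := by
        refine add_le_add (add_le_add degree_C_le ?_) ?_
        · simpa using degree_pow_le _ j
        · refine le_trans (degree_prod_le _ _) ?_
          refine Finset.sum_le_sum fun l _ => ?_
          simpa using degree_pow_le _ (μ l)
    _ < (ν : WithBot ℕ) := by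
        rw [zero_add]
        have h1 : j + ∑ l ∈ Finset.univ.erase k, μ l < ν := by
          have h2 := Finset.sum_erase_add Finset.univ μ (Finset.mem_univ k)
          have h3 := hμ k
          omega
        rw [← Nat.cast_sum, ← Nat.cast_add]
        exact_mod_cast h1

theorem Bfam_linIndep (m : ℕ) (a : ℂ) (ha : a ≠ 0) (z : Fin m → ℂ) (hz : Function.Injective z)
    (μ : Fin m → ℕ) :
    LinearIndependent ℂ (fun b : Σ k : Fin m, Fin (μ k) => Bfam m a z μ b.1 b.2) := by
  rw [Fintype.linearIndependent_iff]
  intro g hg b0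
  obtain ⟨k0, j0⟩ := b0
  have hg2 : ∑ k : Fin m, ∑ j : Fin (μ k), g ⟨k, j⟩ • Bfam m a z μ k j = 0 := by
    rw [← hg, ← Finset.univ_sigma_univ, Finset.sum_sigma]
  set gk : Polynomial ℂ := (X - C (z k0)) ^ (μ k0) with hgk
  set Pr : Polynomial ℂ := ∏ l ∈ Finset.univ.erase k0, (X - C (z l)) ^ (μ l) with hPr
  set p : Polynomial ℂ := ∑ j : Fin (μ k0), C (g ⟨k0, j⟩) * (X - C (z k0)) ^ (j : ℕ) with hp
  have hinner : ∑ j : Fin (μ k0), g ⟨k0, j⟩ • Bfam m a z μ k0 j = (C a * Pr) * p := by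
    rw [hp, Finset.mul_sum]
    refine Finset.sum_congr rfl fun j _ => ?_
    rw [smul_eq_C_mul, Bfam]; ring
  have hdvd_others : ∀ k ∈ Finset.univ.erase k0,
      gk ∣ ∑ j : Fin (μ k), g ⟨k, j⟩ • Bfam m a z μ k j := by
    intro k hk
    refine Finset.dvd_sum fun j _ => ?_
    have h1 : gk ∣ ∏ l ∈ Finset.univ.erase k, (X - C (z l)) ^ (μ l) :=
      Finset.dvd_prod_of_mem _
        (Finset.mem_erase.mpr ⟨((Finset.mem_erase.mp hk).1).symm, Finset.mem_univ _⟩)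
    rw [smul_eq_C_mul, Bfam]
    exact (h1.mul_left _).mul_left _
  have hdvd : gk ∣ (C a * Pr) * p := by
    have hsplit := Finset.sum_erase_add Finset.univ
      (fun k => ∑ j : Fin (μ k), g ⟨k, j⟩ • Bfam m a z μ k j) (Finset.mem_univ k0)
    beta_reduce at hsplit
    rw [hg2, hinner] at hsplit
    have heq : (C a * Pr) * p
        = - ∑ k ∈ Finset.univ.erase k0, ∑ j : Fin (μ k), g ⟨k, j⟩ • Bfam m a z μ k j := by
      linear_combination hsplit
    rw [heq]
    exact Dvd.dvd.neg_right (Finset.dvd_sum hdvd_others)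
  have hcop : IsCoprime gk (C a * Pr) := by
    rw [isCoprime_mul_unit_left_right (isUnit_C.mpr (isUnit_iff_ne_zero.mpr ha)) _ _]
    refine IsCoprime.prod_right fun l hl => ?_
    have hne : k0 ≠ l := fun h => (Finset.mem_erase.mp hl).1 h.symm
    exact (Polynomial.pairwise_coprime_X_sub_C hz hne).pow
  have hdvd_p : gk ∣ p := hcop.dvd_of_dvd_mul_left hdvd
  have hpdeg : p ∈ degreeLT ℂ (μ k0) := by
    refine Submodule.sum_mem _ fun j _ => ?_
    rw [mem_degreeLT]
    refine lt_of_le_of_lt (degree_mul_le _ _) ?_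
    have h1 : (C (g ⟨k0, j⟩)).degree ≤ 0 := degree_C_le
    have h2 : ((X - C (z k0)) ^ (j : ℕ)).degree ≤ ((j : ℕ) : WithBot ℕ) := by
      simpa using degree_pow_le (X - C (z k0)) (j : ℕ)
    refine lt_of_le_of_lt (le_trans (add_le_add h1 h2) (by rw [zero_add])) ?_
    exact_mod_cast Nat.cast_lt.mpr j.isLt
  have hgkdeg : gk.degree = ((μ k0 : ℕ) : WithBot ℕ) := by
    simp [hgk]
  have hp0 : p = 0 :=
    eq_zero_of_dvd_of_degree_lt hdvd_p (by rw [hgkdeg]; exact mem_degreeLT.mp hpdeg)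
  have htay : (taylor (z k0)) p = ∑ j : Fin (μ k0), C (g ⟨k0, j⟩) * X ^ (j : ℕ) := by
    rw [hp, map_sum]
    refine Finset.sum_congr rfl fun j _ => ?_
    simp [taylor_apply, mul_comp, sub_comp, pow_comp]
  have hq0 : (∑ j : Fin (μ k0), C (g ⟨k0, j⟩) * X ^ (j : ℕ)) = (0 : Polynomial ℂ) := by
    rw [← htay, hp0, map_zero]
  have hco := congrArg (fun q => Polynomial.coeff q (j0 : ℕ)) hq0
  simpa [finset_sum_coeff, coeff_C_mul, coeff_X_pow, Fin.val_eq_val] using hco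

theorem Bfam_sep (ν m : ℕ) (hν : 1 ≤ ν) (a : ℂ) (ha : a ≠ 0)
    (z : Fin m → ℂ) (hz : Function.Injective z)
    (μ : Fin m → ℕ) (hμ : ∀ k, 1 ≤ μ k) (hsum : ∑ k : Fin m, μ k = ν)
    (w : Fin ν → ℂ)
    (hw : ∀ b : Σ k : Fin m, Fin (μ k), polyActV ν (Bfam m a z μ b.1 b.2) w = 0) :
    w = 0 := by
  have hmem : ∀ b : Σ k : Fin m, Fin (μ k), Bfam m a z μ b.1 b.2 ∈ degreeLT ℂ ν :=
    fun b => Bfam_mem m ν a z μ hμ hsum b.1 b.2 (by have := hμ b.1; have := b.2.isLt; omega)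
  set B' : (Σ k : Fin m, Fin (μ k)) → degreeLT ℂ ν :=
    fun b => ⟨Bfam m a z μ b.1 b.2, hmem b⟩ with hB'
  have hli : LinearIndependent ℂ B' :=
    LinearIndependent.of_comp ((degreeLT ℂ ν).subtype) (Bfam_linIndep m a ha z hz μ)
  have hcard : Fintype.card (Σ k : Fin m, Fin (μ k)) = Module.finrank ℂ (degreeLT ℂ ν) := by
    rw [Fintype.card_sigma]
    simp only [Fintype.card_fin]
    rw [hsum, (Polynomial.degreeLTEquiv ℂ ν).finrank_eq, Module.finrank_fin_fun]
  haveI : Nonempty (Σ k : Fin m, Fin (μ k)) := by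
    rw [← Fintype.card_pos_iff, Fintype.card_sigma]
    simp only [Fintype.card_fin]
    omega
  let bas := basisOfLinearIndependentOfCardEqFinrank hli hcard
  let φ : degreeLT ℂ ν →ₗ[ℂ] ℂ :=
    { toFun := fun p => ∑ i : Fin ν, (p : Polynomial ℂ).coeff i * w i
      map_add' := fun p q => by
        simp [add_mul, Finset.sum_add_distrib]
      map_smul' := fun c p => by
        simp [Finset.mul_sum, mul_assoc] }
  have hφ0 : φ = 0 := by
    refine bas.ext fun b => ?_
    rw [show bas b = B' b from congrFun (coe_basisOfLinearIndependentOfCardEqFinrank hli hcard) b]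
    exact hw b
  funext i
  have hXi : (X : Polynomial ℂ) ^ (i : ℕ) ∈ degreeLT ℂ ν :=
    mem_degreeLT.mpr (lt_of_le_of_lt (degree_X_pow_le _) (Nat.cast_lt.mpr i.isLt))
  have h := LinearMap.congr_fun hφ0 ⟨X ^ (i : ℕ), hXi⟩
  simp only [LinearMap.coe_mk, AddHom.coe_mk, LinearMap.zero_apply, φ] at h
  rw [show (0 : Fin ν → ℂ) i = 0 from rfl, ← h]
  simp [coeff_X_pow, Fin.val_eq_val]

/-- positive definiteness of the energy form
`q_e(w) = Σ_k μ_k |P_k(T)w⁰|² + Σ_k Σ_{j=1}^{μ_k−1} ε^{μ_k−j} (1−|z_k|²)^{2(μ_k−j)} |Q_{k,j}(T)w⁰|²`. -/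
theorem stmt_2 (ν m : ℕ) (hν : 1 ≤ ν) (a : ℂ) (ha : a ≠ 0)
    (z : Fin m → ℂ) (hz : Function.Injective z)
    (μ : Fin m → ℕ) (hμ : ∀ k, 1 ≤ μ k) (hsum : ∑ k : Fin m, μ k = ν)
    (hzmult : ∀ k, 2 ≤ μ k → ‖z k‖ < 1)
    (ε : ℝ) (hε : 0 < ε) :
    ∀ w : Fin ν → ℂ, w ≠ 0 →
      0 < ∑ k : Fin m, (μ k : ℝ) * ‖polyActV ν (Pkpoly m a z μ k) w‖ ^ 2
          + ∑ k : Fin m, ∑ j ∈ Finset.Icc 1 (μ k - 1),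
              ε ^ (μ k - j) * (1 - ‖z k‖ ^ 2) ^ (2 * (μ k - j))
                * ‖polyActV ν (Qkjpoly m a z μ k j) w‖ ^ 2 := by
  intro w hw
  have hex : ∃ b : Σ k : Fin m, Fin (μ k), polyActV ν (Bfam m a z μ b.1 b.2) w ≠ 0 := by
    by_contra h
    push_neg at h
    exact hw (Bfam_sep ν m hν a ha z hz μ hμ hsum w h)
  obtain ⟨⟨k, j⟩, hb⟩ := hex
  have habs : 0 < ‖polyActV ν (Bfam m a z μ k (j : ℕ)) w‖ ^ 2 :=
    pow_pos (norm_pos_iff.mpr hb) 2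
  have hnn1 : ∀ k' ∈ Finset.univ,
      (0:ℝ) ≤ (μ k' : ℝ) * ‖polyActV ν (Pkpoly m a z μ k') w‖ ^ 2 :=
    fun k' _ => mul_nonneg (Nat.cast_nonneg _) (sq_nonneg _)
  have hnn2 : ∀ k' : Fin m, ∀ j' ∈ Finset.Icc 1 (μ k' - 1),
      (0:ℝ) ≤ ε ^ (μ k' - j') * (1 - ‖z k'‖ ^ 2) ^ (2 * (μ k' - j'))
          * ‖polyActV ν (Qkjpoly m a z μ k' j') w‖ ^ 2 := by
    intro k' j' _
    have h1 : (0:ℝ) ≤ (1 - ‖z k'‖ ^ 2) ^ (2 * (μ k' - j')) := by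
      rw [pow_mul]; exact pow_nonneg (sq_nonneg _) _
    exact mul_nonneg (mul_nonneg (pow_nonneg hε.le _) h1) (sq_nonneg _)
  have hsum1nn : (0:ℝ) ≤ ∑ k' : Fin m,
      (μ k' : ℝ) * ‖polyActV ν (Pkpoly m a z μ k') w‖ ^ 2 :=
    Finset.sum_nonneg hnn1
  have hsum2nn : (0:ℝ) ≤ ∑ k' : Fin m, ∑ j' ∈ Finset.Icc 1 (μ k' - 1),
      ε ^ (μ k' - j') * (1 - ‖z k'‖ ^ 2) ^ (2 * (μ k' - j'))
        * ‖polyActV ν (Qkjpoly m a z μ k' j') w‖ ^ 2 :=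
    Finset.sum_nonneg fun k' _ => Finset.sum_nonneg (hnn2 k')
  by_cases hcase : (j : ℕ) = μ k - 1
  · -- the P_k term is positive
    have hPeq : Pkpoly m a z μ k = Bfam m a z μ k (j : ℕ) := by
      rw [Pkpoly, Bfam, hcase]
    have hpos : (0:ℝ) < (μ k : ℝ) * ‖polyActV ν (Pkpoly m a z μ k) w‖ ^ 2 := by
      rw [hPeq]
      exact mul_pos (by exact_mod_cast hμ k) habs
    refine add_pos_of_pos_of_nonneg ?_ hsum2nn
    exact Finset.sum_pos' hnn1 ⟨k, Finset.mem_univ k, hpos⟩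
  · -- the Q_{k,j+1} term is positive
    have hjlt : (j : ℕ) < μ k - 1 := lt_of_le_of_ne (by have := j.isLt; omega) hcase
    have hμ2 : 2 ≤ μ k := by omega
    have hz1 : ‖z k‖ < 1 := hzmult k hμ2
    have hpos1 : (0:ℝ) < 1 - ‖z k‖ ^ 2 := by
      have h0 := norm_nonneg (z k)
      nlinarith
    have hmem : (j : ℕ) + 1 ∈ Finset.Icc 1 (μ k - 1) := by
      rw [Finset.mem_Icc]; omega
    have hQeq : Qkjpoly m a z μ k ((j : ℕ) + 1) = Bfam m a z μ k (j : ℕ) := by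
      rw [Qkjpoly, Bfam, Nat.add_sub_cancel]
    have hpos : (0:ℝ) < ε ^ (μ k - ((j:ℕ)+1))
        * (1 - ‖z k‖ ^ 2) ^ (2 * (μ k - ((j:ℕ)+1)))
        * ‖polyActV ν (Qkjpoly m a z μ k ((j:ℕ)+1)) w‖ ^ 2 := by
      rw [hQeq]
      exact mul_pos (mul_pos (pow_pos hε _) (pow_pos hpos1 _)) habs
    refine add_pos_of_nonneg_of_pos hsum1nn ?_
    refine Finset.sum_pos' (fun k' _ => Finset.sum_nonneg (hnn2 k')) ⟨k, Finset.mem_univ k, ?_⟩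
    exact Finset.sum_pos' (hnn2 k) ⟨(j:ℕ)+1, hmem, hpos⟩
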